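/- Let $T$ be a finite totally ordered set and $M_\epsilon$ a family of nonnegative irreducible matrices indexed by $T \times T$ satisfying: (M.1) for each $i,j$, either $M_\epsilon(ij) > 0$ for all $\epsilon > 0$ or $M_\epsilon(ij) = 0$ for all $\epsilon$; (M.2) there is $c > 0$ with $M_\epsilon(ij) \leq c$ for all $\epsilon$ and $i < j$; (M.3) $M_\epsilon(ij) \to 0$ as $\epsilon \to 0$ for $i > j$; (M.4) $M_\epsilon(ii) \to \eta_i \geq 0$ for each $i$. Let $T_0 = \{ i : \eta_i = \max_j \eta_j \}$ and $T_1 = T \setminus T_0$, and let $(b_\epsilon(i))$ be the right Perron eigenvector with $\sum_i b_\epsilon(i) = 1$. Then for each $i \in T_1$, $b_\epsilon(i) \asymp \sum_{j \in T_0} \sum_{w \in SP(i, j : T_1)} M_\epsilon(w) b_\epsilon(j)$ as $\epsilon \to 0$, where for a path $w = w_1 \cdots w_p$, $M_\epsilon(w) = \prod_{k=1}^{p-1} M_\epsilon(w_k w_{k+1})$ and $SP(i, j : T_1)$ is the set of simple paths from $i$ to $j$ whose interior vertices lie in $T_1$. -/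

import Mathlib

open Filter Set
open scoped Topology Classical

/-- The weight `M(w) = ∏ M(w_k w_{k+1})` of a path `w` of length `p + 2`. -/
noncomputable def pathWeight {m : ℕ} (M : Matrix (Fin m) (Fin m) ℝ) {p : ℕ}
    (w : Fin (p + 2) → Fin m) : ℝ :=
  ∏ k : Fin (p + 1), M (w k.castSucc) (w k.succ)

/-- `∑_{w ∈ SP(i, j : T₁)} M(w)`: the sum of the weights of all simple paths
from `i` to `j` whose vertices lie in `T₁ ∪ {i, j}`. -/
noncomputable def simplePathSum {m : ℕ} (M : Matrix (Fin m) (Fin m) ℝ)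
    (i j : Fin m) (T1 : Finset (Fin m)) : ℝ :=
  ∑ p ∈ Finset.range m, ∑ w ∈ Finset.univ.filter
      (fun w : Fin (p + 2) → Fin m => Function.Injective w ∧ w 0 = i ∧
        w (Fin.last (p + 1)) = j ∧ ∀ k, w k = i ∨ w k = j ∨ w k ∈ T1),
    pathWeight M w

/-- Asymptotic comparability of two families of reals as `ε → 0`. -/
def AsympF (f g : ℝ → ℝ) : Prop :=
  ∃ c ≥ (1:ℝ), ∃ ε₀ > (0:ℝ), ∀ ε : ℝ, 0 < ε → ε ≤ ε₀ →
    c⁻¹ * g ε ≤ f ε ∧ f ε ≤ c * g ε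


namespace Stmt11Aux

variable {m : ℕ}

/-- weight of a walk of length `L` indexed by naturals -/
noncomputable def nweight (A : Matrix (Fin m) (Fin m) ℝ) (c : ℕ → Fin m) (L : ℕ) : ℝ :=
  ∏ t ∈ Finset.range L, A (c t) (c (t+1))

/-- clamp a `Fin`-indexed path to a ℕ-indexed one -/
def ext {p : ℕ} (w : Fin (p+2) → Fin m) : ℕ → Fin m :=
  fun t => w ⟨min t (p+1), by omega⟩

lemma ext_eq {p : ℕ} (w : Fin (p+2) → Fin m) {t : ℕ} (h : t ≤ p+1) :
    ext w t = w ⟨t, by omega⟩ := by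
  unfold ext; congr 1; exact Fin.ext (by simp [Nat.min_eq_left h])

lemma ext_zero {p : ℕ} (w : Fin (p+2) → Fin m) : ext w 0 = w 0 := by
  rw [ext_eq w (by omega)]; congr 1

lemma ext_last {p : ℕ} (w : Fin (p+2) → Fin m) : ext w (p+1) = w (Fin.last (p+1)) := by
  rw [ext_eq w (by omega)]; rfl

lemma nweight_nonneg {A : Matrix (Fin m) (Fin m) ℝ} (hA : ∀ a b, 0 ≤ A a b)
    (c : ℕ → Fin m) (L : ℕ) : 0 ≤ nweight A c L :=
  Finset.prod_nonneg fun _ _ => hA _ _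

lemma nweight_le_pow {A : Matrix (Fin m) (Fin m) ℝ} {B : ℝ} (hA : ∀ a b, 0 ≤ A a b)
    (hAB : ∀ a b, A a b ≤ B) (c : ℕ → Fin m) (L : ℕ) : nweight A c L ≤ B ^ L := by
  calc nweight A c L ≤ ∏ _t ∈ Finset.range L, B :=
        Finset.prod_le_prod (fun _ _ => hA _ _) (fun _ _ => hAB _ _)
    _ = B ^ L := by rw [Finset.prod_const, Finset.card_range]

lemma nweight_down {A : Matrix (Fin m) (Fin m) ℝ} {B δ : ℝ} (hA : ∀ a b, 0 ≤ A a b)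
    (hAB : ∀ a b, A a b ≤ B) (hB0 : 0 ≤ B) (hδ : ∀ a b : Fin m, b < a → A a b ≤ δ)
    (hδ0 : 0 ≤ δ) (c : ℕ → Fin m) (L : ℕ) {t : ℕ} (ht : t < L)
    (hdown : c (t+1) < c t) : nweight A c L ≤ δ * B ^ (L-1) := by
  have hmem : t ∈ Finset.range L := Finset.mem_range.2 ht
  rw [nweight, ← Finset.mul_prod_erase _ _ hmem]
  have h1 : ∏ s ∈ (Finset.range L).erase t, A (c s) (c (s+1)) ≤ B ^ (L-1) := by
    calc (∏ s ∈ (Finset.range L).erase t, A (c s) (c (s+1)))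
        ≤ ∏ _s ∈ (Finset.range L).erase t, B :=
          Finset.prod_le_prod (fun _ _ => hA _ _) (fun _ _ => hAB _ _)
      _ = B ^ (L-1) := by
          rw [Finset.prod_const, Finset.card_erase_of_mem hmem, Finset.card_range]
  exact mul_le_mul (hδ _ _ hdown) h1
    (Finset.prod_nonneg fun _ _ => hA _ _) hδ0

lemma nweight_chain {A : Matrix (Fin m) (Fin m) ℝ} {bb : Fin m → ℝ} {ee : ℝ}
    (hA : ∀ a b, 0 ≤ A a b) (hb : ∀ a, 0 < bb a)
    (heq : ∀ a, ∑ j, A a j * bb j = ee * bb a) (c : ℕ → Fin m) (L : ℕ) :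
    nweight A c L * bb (c L) ≤ ee ^ L * bb (c 0) := by
  have hee : 0 ≤ ee := by
    have h1 : 0 ≤ ee * bb (c 0) := by
      rw [← heq (c 0)]
      exact Finset.sum_nonneg fun j _ => mul_nonneg (hA _ _) (hb j).le
    nlinarith [hb (c 0)]
  have hstep : ∀ a j : Fin m, A a j * bb j ≤ ee * bb a := by
    intro a j
    rw [← heq a]
    exact Finset.single_le_sum (f := fun j => A a j * bb j)
      (fun k _ => mul_nonneg (hA _ _) (hb k).le) (Finset.mem_univ j)
  induction L with
  | zero => simp [nweight]
  | succ L ih =>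
      have h1 : nweight A c (L+1) = nweight A c L * A (c L) (c (L+1)) := by
        rw [nweight, Finset.prod_range_succ]; rfl
      have h2 : nweight A c L * (A (c L) (c (L+1)) * bb (c (L+1)))
          ≤ nweight A c L * (ee * bb (c L)) :=
        mul_le_mul_of_nonneg_left (hstep _ _) (nweight_nonneg hA c L)
      have h3 : ee * (nweight A c L * bb (c L)) ≤ ee * (ee ^ L * bb (c 0)) :=
        mul_le_mul_of_nonneg_left ih hee
      calc nweight A c (L+1) * bb (c (L+1))
          = nweight A c L * (A (c L) (c (L+1)) * bb (c (L+1))) := by rw [h1]; ring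
        _ ≤ nweight A c L * (ee * bb (c L)) := h2
        _ = ee * (nweight A c L * bb (c L)) := by ring
        _ ≤ ee * (ee ^ L * bb (c 0)) := h3
        _ = ee ^ (L+1) * bb (c 0) := by ring

lemma pathWeight_eq_nweight (A : Matrix (Fin m) (Fin m) ℝ) {p : ℕ}
    (w : Fin (p+2) → Fin m) : pathWeight A w = nweight A (ext w) (p+1) := by
  rw [nweight, ← Fin.prod_univ_eq_prod_range (fun t => A (ext w t) (ext w (t+1))) (p+1)]
  unfold pathWeight
  refine Finset.prod_congr rfl fun k _ => ?_
  have h1 : ext w (k : ℕ) = w k.castSucc := by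
    rw [ext_eq w (by omega)]; congr 1
  have h2 : ext w ((k : ℕ)+1) = w k.succ := by
    rw [ext_eq w (by omega)]; congr 1
  rw [h1, h2]

/-- prepend a vertex to a ℕ-indexed path -/
def pre (i : Fin m) (c : ℕ → Fin m) : ℕ → Fin m
  | 0 => i
  | (s+1) => c s

lemma nweight_pre (A : Matrix (Fin m) (Fin m) ℝ) (i : Fin m) (c : ℕ → Fin m) (L : ℕ) :
    nweight A (pre i c) (L+1) = A i (c 0) * nweight A c L := by
  rw [nweight, Finset.prod_range_succ']
  rw [mul_comm]
  congr 1

lemma exists_down (c : ℕ → Fin m) (L : ℕ) (hL : 0 < L) (hclosed : c L = c 0)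
    (hne : ∀ t < L, c t ≠ c (t+1)) : ∃ t < L, c (t+1) < c t := by
  obtain ⟨t₀, ht₀, hmax⟩ := Finset.exists_max_image (Finset.range L) c
    ⟨0, Finset.mem_range.2 hL⟩
  have ht₀L := Finset.mem_range.1 ht₀
  have hle : c (t₀+1) ≤ c t₀ := by
    by_cases h : t₀ + 1 < L
    · exact hmax _ (Finset.mem_range.2 h)
    · have he : t₀ + 1 = L := by omega
      rw [he, hclosed]
      exact hmax _ (Finset.mem_range.2 hL)
  exact ⟨t₀, ht₀L, lt_of_le_of_ne hle (fun e => hne t₀ ht₀L e.symm)⟩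



noncomputable def pset (S : Finset (Fin m)) (i k : Fin m) (q : ℕ) :
    Finset (Fin (q+2) → Fin m) :=
  Finset.univ.filter (fun w => Function.Injective w ∧ w 0 = i ∧
    w (Fin.last (q+1)) = k ∧ ∀ t, w t = i ∨ w t = k ∨ w t ∈ S)

lemma sps_eq (A : Matrix (Fin m) (Fin m) ℝ) (i k : Fin m) (S : Finset (Fin m)) :
    simplePathSum A i k S = ∑ q ∈ Finset.range m, ∑ w ∈ pset S i k q, pathWeight A w :=
  rfl

lemma pathWeight_nonneg {A : Matrix (Fin m) (Fin m) ℝ} (hA : ∀ a b, 0 ≤ A a b)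
    {p : ℕ} (w : Fin (p+2) → Fin m) : 0 ≤ pathWeight A w :=
  Finset.prod_nonneg fun _ _ => hA _ _

lemma sps_nonneg {A : Matrix (Fin m) (Fin m) ℝ} (hA : ∀ a b, 0 ≤ A a b)
    (i k : Fin m) (S : Finset (Fin m)) : 0 ≤ simplePathSum A i k S := by
  rw [sps_eq]
  exact Finset.sum_nonneg fun q _ => Finset.sum_nonneg fun w _ => pathWeight_nonneg hA w

lemma pset_self_empty (S : Finset (Fin m)) (i k : Fin m) : pset S i k m = ∅ := by
  rw [Finset.eq_empty_iff_forall_notMem]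
  intro w hw
  rw [pset, Finset.mem_filter] at hw
  have := Fintype.card_le_of_injective w hw.2.1
  simp [Fintype.card_fin] at this

lemma edge_le_sps {A : Matrix (Fin m) (Fin m) ℝ} (hA : ∀ a b, 0 ≤ A a b)
    (hm : 0 < m) {i k : Fin m} (hik : i ≠ k) (S : Finset (Fin m)) :
    A i k ≤ simplePathSum A i k S := by
  have hw0 : (![i, k] : Fin 2 → Fin m) ∈ pset S i k 0 := by
    rw [pset, Finset.mem_filter]
    refine ⟨Finset.mem_univ _, ?_, by simp, ?_, ?_⟩
    · intro a b hab
      fin_cases a <;> fin_cases b <;> simp_all <;>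
        first | rfl | exact absurd hab hik | exact absurd hab.symm hik
    · show (![i, k] : Fin 2 → Fin m) (Fin.last 1) = k; simp [Fin.last]
    · intro t; fin_cases t <;> simp
  have hpw : pathWeight A (![i, k] : Fin 2 → Fin m) = A i k := by
    rw [pathWeight, Fin.prod_univ_one]
    congr 1
  calc A i k = pathWeight A (![i, k] : Fin 2 → Fin m) := hpw.symm
    _ ≤ ∑ w ∈ pset S i k 0, pathWeight A w :=
        Finset.single_le_sum (fun w _ => pathWeight_nonneg hA w) hw0
    _ ≤ simplePathSum A i k S := by
        rw [sps_eq]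
        exact Finset.single_le_sum
          (f := fun q => ∑ w ∈ pset S i k q, pathWeight A w)
          (fun q _ => Finset.sum_nonneg fun w _ => pathWeight_nonneg hA w)
          (Finset.mem_range.2 hm)

lemma pathWeight_cons (A : Matrix (Fin m) (Fin m) ℝ) {p : ℕ} (i : Fin m)
    (w : Fin (p+2) → Fin m) :
    pathWeight A (Fin.cons i w) = A i (w 0) * pathWeight A w := by
  rw [pathWeight, pathWeight, Fin.prod_univ_succ]
  rw [show ((0:Fin (p+2)).succ) = 1 from rfl]
  norm_num [← Fin.succ_castSucc]



lemma cons_mem_pset {S : Finset (Fin m)} {i k j : Fin m} {q : ℕ}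
    (hkS : k ∉ S) (hki : k ≠ i) (hjS : j ∈ S.erase i)
    {w : Fin (q+2) → Fin m} (hw : w ∈ pset (S.erase i) j k q) :
    (Fin.cons i w : Fin (q+3) → Fin m) ∈ pset S i k (q+1) := by
  rw [pset, Finset.mem_filter] at hw ⊢
  obtain ⟨-, winj, hw0, hwlast, hwmem⟩ := hw
  have hji : j ≠ i := (Finset.mem_erase.1 hjS).1
  have hjS' : j ∈ S := Finset.mem_of_mem_erase hjS
  have hnotr : i ∉ Set.range w := by
    rintro ⟨t, ht⟩
    rcases hwmem t with h | h | h
    · exact hji (h.symm.trans ht)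
    · exact hki (h.symm.trans ht)
    · rw [ht] at h; exact Finset.notMem_erase i S h
  refine ⟨Finset.mem_univ _, Fin.cons_injective_iff.2 ⟨hnotr, winj⟩,
    Fin.cons_zero _ _, ?_, ?_⟩
  · have he : (Fin.last (q+2) : Fin (q+3)) = (Fin.last (q+1)).succ :=
      (Fin.succ_last _).symm
    rw [he, Fin.cons_succ, hwlast]
  · intro t
    refine Fin.cases ?_ ?_ t
    · left; exact Fin.cons_zero _ _
    · intro s
      rw [Fin.cons_succ]
      rcases hwmem s with h | h | h
      · right; right; rw [h]; exact hjS'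
      · right; left; exact h
      · right; right; exact Finset.mem_of_mem_erase h

lemma step_q {A : Matrix (Fin m) (Fin m) ℝ} (hA : ∀ a b, 0 ≤ A a b)
    {S : Finset (Fin m)} {i k : Fin m} (hkS : k ∉ S) (hki : k ≠ i) (q : ℕ) :
    ∑ j ∈ S.erase i, ∑ w ∈ pset (S.erase i) j k q, A i j * pathWeight A w
      ≤ ∑ w' ∈ pset S i k (q+1), pathWeight A w' := by
  have hrw : ∀ j ∈ S.erase i, ∑ w ∈ pset (S.erase i) j k q, A i j * pathWeight A w
      = ∑ w' ∈ (pset (S.erase i) j k q).image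
          (fun w => (Fin.cons i w : Fin (q+3) → Fin m)), pathWeight A w' := by
    intro j hj
    have hinj : ∀ x ∈ pset (S.erase i) j k q, ∀ y ∈ pset (S.erase i) j k q,
        (Fin.cons i x : Fin (q+3) → Fin m) = Fin.cons i y → x = y := by
      intro x _ y _ h
      exact Fin.cons_right_injective (α := fun _ : Fin (q+3) => Fin m) i h
    rw [Finset.sum_image hinj]
    refine Finset.sum_congr rfl fun w hw => ?_
    have hw0 : w 0 = j := ((Finset.mem_filter.1 hw).2).2.1
    rw [pathWeight_cons, hw0]
  rw [Finset.sum_congr rfl hrw]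
  have hkey : ∀ j : Fin m, ∀ w' ∈ (pset (S.erase i) j k q).image
      (fun w => (Fin.cons i w : Fin (q+3) → Fin m)), w' ((0 : Fin (q+2)).succ) = j := by
    intro j w' hw'
    obtain ⟨w, hw, rfl⟩ := Finset.mem_image.1 hw'
    rw [Fin.cons_succ]
    exact ((Finset.mem_filter.1 hw).2).2.1
  have hdisj : (↑(S.erase i) : Set (Fin m)).PairwiseDisjoint
      (fun j => (pset (S.erase i) j k q).image
        (fun w => (Fin.cons i w : Fin (q+3) → Fin m))) := by
    intro j₁ _ j₂ _ hne
    simp only [Function.onFun]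
    rw [Finset.disjoint_left]
    intro w' h1 h2
    exact hne ((hkey j₁ w' h1).symm.trans (hkey j₂ w' h2))
  rw [← Finset.sum_biUnion hdisj]
  refine Finset.sum_le_sum_of_subset_of_nonneg ?_ (fun w' _ _ => pathWeight_nonneg hA w')
  intro w' hw'
  obtain ⟨j, hj, hw'⟩ := Finset.mem_biUnion.1 hw'
  obtain ⟨w, hw, rfl⟩ := Finset.mem_image.1 hw'
  exact cons_mem_pset hkS hki hj hw

lemma sum_edge_mul_sps_le {A : Matrix (Fin m) (Fin m) ℝ} (hA : ∀ a b, 0 ≤ A a b)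
    {S : Finset (Fin m)} {i k : Fin m} (hkS : k ∉ S) (hki : k ≠ i) :
    ∑ j ∈ S.erase i, A i j * simplePathSum A j k (S.erase i)
      ≤ simplePathSum A i k S := by
  set g : ℕ → ℝ := fun q => ∑ w ∈ pset S i k q, pathWeight A w with hg
  have h1 : ∑ j ∈ S.erase i, A i j * simplePathSum A j k (S.erase i)
      = ∑ q ∈ Finset.range m, ∑ j ∈ S.erase i,
          ∑ w ∈ pset (S.erase i) j k q, A i j * pathWeight A w := by
    simp only [sps_eq, Finset.mul_sum]
    rw [Finset.sum_comm]
  rw [h1, sps_eq]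
  have h2 : ∑ q ∈ Finset.range m, ∑ j ∈ S.erase i,
      ∑ w ∈ pset (S.erase i) j k q, A i j * pathWeight A w
      ≤ ∑ q ∈ Finset.range m, g (q+1) :=
    Finset.sum_le_sum fun q _ => step_q hA hkS hki q
  refine h2.trans ?_
  have h0 : 0 ≤ g 0 := Finset.sum_nonneg fun w _ => pathWeight_nonneg hA w
  have hmz : g m = 0 := by rw [hg]; simp [pset_self_empty]
  have e1 : ∑ q ∈ Finset.range (m+1), g q = (∑ q ∈ Finset.range m, g (q+1)) + g 0 :=
    Finset.sum_range_succ' g m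
  have e2 : ∑ q ∈ Finset.range (m+1), g q = (∑ q ∈ Finset.range m, g q) + g m :=
    Finset.sum_range_succ g m
  linarith

lemma sum_le_of_bound {α : Type*} (s : Finset α) (f : α → ℝ) {c : ℝ} (hc : 0 ≤ c)
    {n : ℕ} (hcard : s.card ≤ n) (h : ∀ x ∈ s, f x ≤ c) : ∑ x ∈ s, f x ≤ n * c := by
  calc ∑ x ∈ s, f x ≤ s.card • c := Finset.sum_le_card_nsmul s f c h
    _ = (s.card : ℝ) * c := nsmul_eq_mul _ _
    _ ≤ n * c := mul_le_mul_of_nonneg_right (Nat.cast_le.2 hcard) hc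

lemma cyc_term_le {A : Matrix (Fin m) (Fin m) ℝ} {B δ : ℝ} (hA : ∀ a b, 0 ≤ A a b)
    (hAB : ∀ a b, A a b ≤ B) (hB1 : 1 ≤ B)
    (hδ : ∀ a b : Fin m, b < a → A a b ≤ δ) (hδ0 : 0 ≤ δ)
    {S' : Finset (Fin m)} {i j : Fin m} {q : ℕ} (hq : q < m) (hji : j ≠ i)
    {w : Fin (q+2) → Fin m} (hw : w ∈ pset S' j i q) :
    A i j * pathWeight A w ≤ δ * B^(m+1) := by
  rw [pset, Finset.mem_filter] at hw
  obtain ⟨-, winj, hw0, hwlast, -⟩ := hw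
  set c : ℕ → Fin m := pre i (ext w) with hc
  have h1 : A i j * pathWeight A w = nweight A c (q+2) := by
    rw [pathWeight_eq_nweight, show (q+2) = (q+1)+1 from rfl, hc, nweight_pre,
      ext_zero, hw0]
  have hclosed : c (q+2) = c 0 := by
    show ext w (q+1) = i
    rw [ext_last, hwlast]
  have hne : ∀ t < q+2, c t ≠ c (t+1) := by
    intro t ht
    match t with
    | 0 =>
        show i ≠ ext w 0
        rw [ext_zero, hw0]
        exact fun e => hji e.symm
    | (s+1) =>
        show ext w s ≠ ext w (s+1)
        rw [ext_eq w (by omega), ext_eq w (by omega)]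
        intro e
        have := winj e
        simp only [Fin.mk.injEq] at this
        omega
  obtain ⟨t, ht, hdown⟩ := exists_down c (q+2) (by omega) hclosed hne
  have h2 := nweight_down hA hAB (le_trans zero_le_one hB1) hδ hδ0 c (q+2) ht hdown
  rw [h1]
  refine h2.trans ?_
  exact mul_le_mul_of_nonneg_left (pow_le_pow_right₀ hB1 (by omega)) hδ0

lemma cyc_sum_le {A : Matrix (Fin m) (Fin m) ℝ} {B δ : ℝ} (hA : ∀ a b, 0 ≤ A a b)
    (hAB : ∀ a b, A a b ≤ B) (hB1 : 1 ≤ B)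
    (hδ : ∀ a b : Fin m, b < a → A a b ≤ δ) (hδ0 : 0 ≤ δ) (hm : 0 < m)
    (S : Finset (Fin m)) (i : Fin m) :
    ∑ j ∈ S.erase i, A i j * simplePathSum A j i (S.erase i)
      ≤ (m : ℝ) * ((m : ℝ) * ((m : ℝ)^(m+1) * (δ * B^(m+1)))) := by
  have hb0 : (0:ℝ) ≤ δ * B^(m+1) :=
    mul_nonneg hδ0 (pow_nonneg (le_trans zero_le_one hB1) _)
  have hcard_univ : (Finset.univ : Finset (Fin m)).card = m := by simp
  refine sum_le_of_bound _ _ ?_ ?_ ?_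
  · positivity
  · exact le_of_le_of_eq (Finset.card_le_univ _) hcard_univ
  · intro j hj
    have hji : j ≠ i := (Finset.mem_erase.1 hj).1
    have h1 : A i j * simplePathSum A j i (S.erase i)
        = ∑ q ∈ Finset.range m, ∑ w ∈ pset (S.erase i) j i q,
            A i j * pathWeight A w := by
      simp only [sps_eq, Finset.mul_sum]
    rw [h1]
    refine sum_le_of_bound _ _ ?_ (le_of_eq (Finset.card_range m)) ?_
    · positivity
    · intro q hq
      have hqm := Finset.mem_range.1 hq
      have hcast : ((m^(m+1) : ℕ) : ℝ) = (m:ℝ)^(m+1) := by push_cast; ring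
      rw [← hcast]
      refine sum_le_of_bound _ _ hb0 ?_ ?_
      · calc (pset (S.erase i) j i q).card ≤ Fintype.card (Fin (q+2) → Fin m) :=
              Finset.card_le_univ _
          _ = m^(q+2) := by simp [Fintype.card_fun]
          _ ≤ m^(m+1) := Nat.pow_le_pow_right hm (by omega)
      · intro w hw
        exact cyc_term_le hA hAB hB1 hδ hδ0 hqm hji hw



lemma ee_nonneg {A : Matrix (Fin m) (Fin m) ℝ} {bb : Fin m → ℝ} {ee : ℝ} (hm : 0 < m)
    (hA : ∀ a b, 0 ≤ A a b) (hb : ∀ a, 0 < bb a)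
    (heq : ∀ a, ∑ j, A a j * bb j = ee * bb a) : 0 ≤ ee := by
  set a : Fin m := ⟨0, hm⟩
  have h1 : 0 ≤ ee * bb a := by
    rw [← heq a]
    exact Finset.sum_nonneg fun j _ => mul_nonneg (hA _ _) (hb j).le
  nlinarith [hb a]

lemma sps_mul_le {A : Matrix (Fin m) (Fin m) ℝ} {bb : Fin m → ℝ} {ee E0 : ℝ}
    (hm : 0 < m) (hA : ∀ a b, 0 ≤ A a b) (hb : ∀ a, 0 < bb a)
    (heq : ∀ a, ∑ j, A a j * bb j = ee * bb a) (heeE : ee ≤ E0)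
    (i k : Fin m) (S : Finset (Fin m)) :
    simplePathSum A i k S * bb k
      ≤ (m : ℝ) * ((m : ℝ)^(m+1) * ((1+E0)^m * bb i)) := by
  have hee0 : 0 ≤ ee := ee_nonneg hm hA hb heq
  have hE1 : (1:ℝ) ≤ 1 + E0 := by linarith
  have hbi : 0 ≤ (1+E0)^m * bb i :=
    mul_nonneg (pow_nonneg (by linarith) _) (hb i).le
  have h1 : simplePathSum A i k S * bb k
      = ∑ q ∈ Finset.range m, ∑ w ∈ pset S i k q, pathWeight A w * bb k := by
    simp only [sps_eq, Finset.sum_mul]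
  rw [h1]
  refine sum_le_of_bound _ _ (by positivity) (le_of_eq (Finset.card_range m)) ?_
  intro q hq
  have hqm := Finset.mem_range.1 hq
  have hcast : ((m^(m+1) : ℕ) : ℝ) = (m:ℝ)^(m+1) := by push_cast; ring
  rw [← hcast]
  refine sum_le_of_bound _ _ hbi ?_ ?_
  · calc (pset S i k q).card ≤ Fintype.card (Fin (q+2) → Fin m) :=
        Finset.card_le_univ _
      _ = m^(q+2) := by simp [Fintype.card_fun]
      _ ≤ m^(m+1) := Nat.pow_le_pow_right hm (by omega)
  · intro w hw
    rw [pset, Finset.mem_filter] at hw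
    obtain ⟨-, -, hw0, hwlast, -⟩ := hw
    have hchain := nweight_chain hA hb heq (ext w) (q+1)
    rw [ext_zero, ext_last, hw0, hwlast] at hchain
    have h2 : pathWeight A w * bb k ≤ ee^(q+1) * bb i := by
      rw [pathWeight_eq_nweight]; exact hchain
    refine h2.trans ?_
    have h3 : ee^(q+1) ≤ (1+E0)^(q+1) := pow_le_pow_left₀ hee0 (by linarith) _
    have h4 : (1+E0)^(q+1) ≤ (1+E0)^m := pow_le_pow_right₀ hE1 (by omega)
    exact mul_le_mul_of_nonneg_right (h3.trans h4) (hb i).le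

lemma upper_induction {A : Matrix (Fin m) (Fin m) ℝ} {bb : Fin m → ℝ} {ee γ : ℝ}
    (hm : 0 < m) (hA : ∀ a b, 0 ≤ A a b) (hb : ∀ a, 0 < bb a)
    (heq : ∀ a, ∑ j, A a j * bb j = ee * bb a) (hγ : 0 < γ)
    (T1 : Finset (Fin m)) (hgap : ∀ a ∈ T1, γ ≤ ee - A a a)
    (hsmall : ∀ (S : Finset (Fin m)) (i : Fin m), i ∈ S →
      (2/γ+1)^m * ∑ j ∈ S.erase i, A i j * simplePathSum A j i (S.erase i) ≤ γ/2) :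
    ∀ n : ℕ, ∀ S : Finset (Fin m), S ⊆ T1 → S.card ≤ n → ∀ i ∈ S,
      bb i ≤ ((2/γ+1)^S.card - 1) * ∑ k ∈ Sᶜ, simplePathSum A i k S * bb k := by
  intro n
  induction n with
  | zero =>
      intro S _ hcard i hiS
      rw [Nat.le_zero, Finset.card_eq_zero] at hcard
      subst hcard
      exact absurd hiS (Finset.notMem_empty i)
  | succ n ih =>
      intro S hST hcard i hiS
      by_cases hc : S.card ≤ n
      · exact ih S hST hc i hiS
      have hcS : S.card = n + 1 := by omega
      set x := 2/γ with hx
      have hx0 : 0 < x := by positivity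
      have hx1 : (1:ℝ) ≤ x + 1 := by linarith
      have hnm : n + 1 ≤ m := by
        have h := Finset.card_le_univ S
        simp only [Finset.card_univ, Fintype.card_fin] at h
        omega
      set Sig0 := ∑ k ∈ Sᶜ, simplePathSum A i k S * bb k with hSig
      have hSig0 : 0 ≤ Sig0 :=
        Finset.sum_nonneg fun k _ => mul_nonneg (sps_nonneg hA _ _ _) (hb k).le
      have hcompl_erase : Finset.univ.erase i = Sᶜ ∪ S.erase i := by
        ext j
        simp only [Finset.mem_erase, Finset.mem_univ, and_true, Finset.mem_union,
          Finset.mem_compl]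
        constructor
        · intro hji
          by_cases hjS : j ∈ S
          · exact Or.inr ⟨hji, hjS⟩
          · exact Or.inl hjS
        · rintro (h | ⟨h, -⟩)
          · exact fun e => h (e ▸ hiS)
          · exact h
      have hdisj : Disjoint (Sᶜ : Finset (Fin m)) (S.erase i) := by
        rw [Finset.disjoint_left]
        intro k hk hk'
        exact (Finset.mem_compl.1 hk) (Finset.mem_of_mem_erase hk')
      have hsplit : (ee - A i i) * bb i
          = ∑ k ∈ Sᶜ, A i k * bb k + ∑ j ∈ S.erase i, A i j * bb j := by
        have h1 : A i i * bb i + ∑ j ∈ Finset.univ.erase i, A i j * bb j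
            = ∑ j : Fin m, A i j * bb j :=
          Finset.add_sum_erase Finset.univ (fun j => A i j * bb j) (Finset.mem_univ i)
        rw [heq i, hcompl_erase, Finset.sum_union hdisj] at h1
        linarith
      set S' := S.erase i with hS'
      have hS'T : S' ⊆ T1 := (Finset.erase_subset _ _).trans hST
      have hS'card : S'.card = n := by
        rw [hS', Finset.card_erase_of_mem hiS, hcS]
        omega
      set C' := (x+1)^n - 1 with hC'
      have hpow1 : (1:ℝ) ≤ (x+1)^n := one_le_pow₀ hx1
      have hC'0 : 0 ≤ C' := by simp only [hC']; linarith
      have hcompl' : (S'ᶜ : Finset (Fin m)) = insert i Sᶜ := by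
        ext k
        simp only [Finset.mem_compl, hS', Finset.mem_erase, Finset.mem_insert,
          not_and_or, not_not] <;> tauto
      have hiSc : i ∉ (Sᶜ : Finset (Fin m)) := by simp [hiS]
      have hIH : ∀ j ∈ S', bb j ≤ C' * (simplePathSum A j i S' * bb i
          + ∑ k ∈ Sᶜ, simplePathSum A j k S' * bb k) := by
        intro j hj
        have h := ih S' hS'T (le_of_eq hS'card) j hj
        rw [hS'card] at h
        rw [hcompl', Finset.sum_insert hiSc] at h
        exact h
      have hgapi : γ ≤ ee - A i i := hgap i (hST hiS)
      have step1 : γ * bb i ≤ (ee - A i i) * bb i :=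
        mul_le_mul_of_nonneg_right hgapi (hb i).le
      have hedge : ∑ k ∈ Sᶜ, A i k * bb k ≤ Sig0 := by
        refine Finset.sum_le_sum fun k hk => ?_
        have hik : i ≠ k := fun e => (Finset.mem_compl.1 hk) (e ▸ hiS)
        exact mul_le_mul_of_nonneg_right (edge_le_sps hA hm hik S) (hb k).le
      -- the middle term
      have e0 : C' * ((∑ j ∈ S', A i j * simplePathSum A j i S') * bb i)
            + C' * (∑ j ∈ S', A i j * (∑ k ∈ Sᶜ, simplePathSum A j k S' * bb k))
          = ∑ j ∈ S', A i j * (C' * (simplePathSum A j i S' * bb i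
              + ∑ k ∈ Sᶜ, simplePathSum A j k S' * bb k)) := by
        rw [Finset.sum_mul, Finset.mul_sum, Finset.mul_sum, ← Finset.sum_add_distrib]
        exact Finset.sum_congr rfl fun j _ => by ring
      have hmid : ∑ j ∈ S', A i j * bb j
          ≤ C' * ((∑ j ∈ S', A i j * simplePathSum A j i S') * bb i)
            + C' * (∑ j ∈ S', A i j * (∑ k ∈ Sᶜ, simplePathSum A j k S' * bb k)) := by
        rw [e0]
        exact Finset.sum_le_sum fun j hj =>
          mul_le_mul_of_nonneg_left (hIH j hj) (hA i j)
      -- cycle smallness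
      have hcyc0 : 0 ≤ ∑ j ∈ S', A i j * simplePathSum A j i S' :=
        Finset.sum_nonneg fun j _ => mul_nonneg (hA _ _) (sps_nonneg hA _ _ _)
      have hcyc : C' * (∑ j ∈ S', A i j * simplePathSum A j i S') ≤ γ/2 := by
        have h1 := hsmall S i hiS
        have h2 : C' ≤ (x+1)^m := by
          have : (x+1)^n ≤ (x+1)^m := pow_le_pow_right₀ hx1 (by omega)
          simp only [hC']; linarith
        calc C' * (∑ j ∈ S', A i j * simplePathSum A j i S')
            ≤ (x+1)^m * (∑ j ∈ S', A i j * simplePathSum A j i S') :=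
              mul_le_mul_of_nonneg_right h2 hcyc0
          _ ≤ γ/2 := h1
      -- swap term
      have hQt : ∑ j ∈ S', A i j * (∑ k ∈ Sᶜ, simplePathSum A j k S' * bb k) ≤ Sig0 := by
        have h1 : ∑ j ∈ S', A i j * (∑ k ∈ Sᶜ, simplePathSum A j k S' * bb k)
            = ∑ k ∈ Sᶜ, (∑ j ∈ S', A i j * simplePathSum A j k S') * bb k := by
          simp only [Finset.mul_sum]
          rw [Finset.sum_comm]
          refine Finset.sum_congr rfl fun k _ => ?_
          rw [Finset.sum_mul]
          exact Finset.sum_congr rfl fun j _ => by ring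
        rw [h1, hSig]
        refine Finset.sum_le_sum fun k hk => ?_
        have hkS : k ∉ S := Finset.mem_compl.1 hk
        have hki : k ≠ i := fun e => hkS (e ▸ hiS)
        exact mul_le_mul_of_nonneg_right (sum_edge_mul_sps_le hA hkS hki) (hb k).le
      -- assemble
      have hbig : γ * bb i ≤ Sig0 + ((γ/2) * bb i + C' * Sig0) := by
        have t1 : C' * ((∑ j ∈ S', A i j * simplePathSum A j i S') * bb i)
            ≤ (γ/2) * bb i := by
          rw [← mul_assoc]
          exact mul_le_mul_of_nonneg_right hcyc (hb i).le
        have t2 : C' * (∑ j ∈ S', A i j * (∑ k ∈ Sᶜ, simplePathSum A j k S' * bb k))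
            ≤ C' * Sig0 := mul_le_mul_of_nonneg_left hQt hC'0
        calc γ * bb i ≤ (ee - A i i) * bb i := step1
          _ = ∑ k ∈ Sᶜ, A i k * bb k + ∑ j ∈ S', A i j * bb j := hsplit
          _ ≤ Sig0 + ((γ/2) * bb i + C' * Sig0) := by
              have := hmid.trans (add_le_add t1 t2)
              linarith
      have hhalf : (γ/2) * bb i ≤ (1 + C') * Sig0 := by linarith
      have hfin : bb i ≤ x * ((1 + C') * Sig0) := by
        have h1 := mul_le_mul_of_nonneg_left hhalf hx0.le
        have h2 : x * ((γ/2) * bb i) = bb i := by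
          rw [← mul_assoc, hx]
          field_simp
        calc bb i = x * ((γ/2) * bb i) := h2.symm
          _ ≤ x * ((1 + C') * Sig0) := h1
      have hkey : x * (1 + C') ≤ (x+1)^(n+1) - 1 := by
        have h1 : (1 : ℝ) + C' = (x+1)^n := by simp only [hC']; ring
        rw [h1, pow_succ]
        nlinarith
      calc bb i ≤ x * ((1 + C') * Sig0) := hfin
        _ = (x * (1 + C')) * Sig0 := by ring
        _ ≤ ((x+1)^(n+1) - 1) * Sig0 := mul_le_mul_of_nonneg_right hkey hSig0
        _ = ((x+1)^S.card - 1) * Sig0 := by rw [hcS]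

end Stmt11Aux

open Stmt11Aux in
theorem stmt11 (m : ℕ) (hm : 0 < m) (M : ℝ → Matrix (Fin m) (Fin m) ℝ)
    (hnn : ∀ ε > (0:ℝ), ∀ i j, 0 ≤ M ε i j)
    (hirr : ∀ ε > (0:ℝ), ∀ i j, ∃ n : ℕ, 0 < (M ε ^ n) i j)
    -- (M.1)
    (hM1 : ∀ i j, (∀ ε > (0:ℝ), 0 < M ε i j) ∨ (∀ ε > (0:ℝ), M ε i j = 0))
    -- (M.2)
    (hM2 : ∃ c > (0:ℝ), ∀ ε > (0:ℝ), ∀ i j, i < j → M ε i j ≤ c)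
    -- (M.3)
    (hM3 : ∀ i j : Fin m, j < i → Tendsto (fun ε => M ε i j) (𝓝[>] 0) (𝓝 0))
    -- (M.4)
    (η : Fin m → ℝ) (hη0 : ∀ i, 0 ≤ η i)
    (hM4 : ∀ i, Tendsto (fun ε => M ε i i) (𝓝[>] 0) (𝓝 (η i)))
    (T0 T1 : Finset (Fin m))
    (hT0 : ∀ i, i ∈ T0 ↔ ∀ j, η j ≤ η i) (hT1 : T1 = T0ᶜ)
    -- right Perron eigenvector, normalized
    (eig : ℝ → ℝ) (b : ℝ → Fin m → ℝ)
    (hbpos : ∀ ε > (0:ℝ), ∀ i, 0 < b ε i)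
    (hbsum : ∀ ε > (0:ℝ), ∑ i, b ε i = 1)
    (hbeig : ∀ ε > (0:ℝ), (M ε).mulVec (b ε) = eig ε • b ε) :
    ∀ i ∈ T1, AsympF (fun ε => b ε i)
      (fun ε => ∑ j ∈ T0, simplePathSum (M ε) i j T1 * b ε j) := by
  intro i hiT1
  have hmn : Nonempty (Fin m) := ⟨i⟩
  obtain ⟨istar, histar⟩ := Finite.exists_max η
  have hT1ne : T1.Nonempty := ⟨i, hiT1⟩
  set γ := T1.inf' hT1ne (fun a => (η istar - η a)/3) with hγdef
  have hγpos : 0 < γ := by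
    rw [hγdef, Finset.lt_inf'_iff]
    intro a ha
    have haT0 : a ∉ T0 := by rw [hT1] at ha; exact Finset.mem_compl.1 ha
    have h1 : ¬ ∀ j, η j ≤ η a := fun h => haT0 ((hT0 a).2 h)
    push_neg at h1
    obtain ⟨j, hj⟩ := h1
    have : η a < η istar := lt_of_lt_of_le hj (histar j)
    linarith
  have hγle : ∀ a ∈ T1, γ ≤ (η istar - η a)/3 := fun a ha =>
    Finset.inf'_le _ ha
  obtain ⟨c₀, hc₀, hM2'⟩ := hM2
  set B := c₀ + η istar + γ + 1 with hBdef
  have hB1 : 1 ≤ B := by have := hη0 istar; linarith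
  set X := (2/γ+1)^m * ((m:ℝ) * ((m:ℝ) * ((m:ℝ)^(m+1) * B^(m+1)))) with hX
  have hX0 : 0 ≤ X := by positivity
  set δ₀ := min 1 ((γ/2) / (X + 1)) with hδ₀def
  have hδ₀pos : 0 < δ₀ :=
    lt_min one_pos (div_pos (by linarith) (by linarith))
  have hδ₀le1 : δ₀ ≤ 1 := min_le_left _ _
  have hδ₀leX : δ₀ * (X + 1) ≤ γ/2 := by
    have h1 : δ₀ ≤ (γ/2) / (X + 1) := min_le_right _ _
    rwa [le_div_iff₀ (by linarith)] at h1
  -- eventual facts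
  have hev : ∀ᶠ ε in 𝓝[>] (0:ℝ), (∀ a b' : Fin m, b' < a → M ε a b' ≤ δ₀)
      ∧ (∀ a : Fin m, |M ε a a - η a| ≤ γ) := by
    refine Filter.Eventually.and ?_ ?_
    · rw [eventually_all]
      intro a
      rw [eventually_all]
      intro b'
      by_cases hba : b' < a
      · filter_upwards [Filter.Tendsto.eventually_lt_const hδ₀pos (hM3 a b' hba)]
          with ε hε
        exact fun _ => hε.le
      · exact Filter.Eventually.of_forall fun ε h => absurd h hba
    · rw [eventually_all]
      intro a
      filter_upwards [Metric.tendsto_nhds.mp (hM4 a) γ hγpos] with ε hε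
      rw [Real.dist_eq] at hε
      exact hε.le
  rw [Filter.eventually_iff, mem_nhdsGT_iff_exists_Ioc_subset] at hev
  obtain ⟨ε₀, hε₀pos, hsub⟩ := hev
  set Cup := (2/γ+1)^m with hCup
  set Klow := (m:ℝ) * ((m:ℝ) * ((m:ℝ)^(m+1) * (1+(m:ℝ)*B)^m)) with hKlow
  refine ⟨max (max Cup Klow) 1, le_max_right _ _, ε₀, hε₀pos, ?_⟩
  intro ε hε hεle
  obtain ⟨hdown, hdiag⟩ : (∀ a b' : Fin m, b' < a → M ε a b' ≤ δ₀)
      ∧ (∀ a : Fin m, |M ε a a - η a| ≤ γ) := hsub ⟨hε, hεle⟩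
  have hAnn : ∀ a b', 0 ≤ M ε a b' := hnn ε hε
  have hb' : ∀ a, 0 < b ε a := hbpos ε hε
  have heqv : ∀ a, ∑ j, M ε a j * b ε j = eig ε * b ε a := by
    intro a
    have h := congrFun (hbeig ε hε) a
    simpa [Matrix.mulVec, dotProduct] using h
  have hAB : ∀ a b', M ε a b' ≤ B := by
    intro a b'
    rcases lt_trichotomy a b' with h | h | h
    · exact (hM2' ε hε a b' h).trans (by have := hη0 istar; linarith)
    · subst h
      have h1 := (abs_le.1 (hdiag a)).2
      have h2 := histar a
      linarith
    · exact (hdown a b' h).trans (by linarith)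
  have hee0 : 0 ≤ eig ε := ee_nonneg hm hAnn hb' heqv
  have heeB : eig ε ≤ (m:ℝ) * B := by
    have h1 : eig ε = ∑ a, eig ε * b ε a := by
      rw [← Finset.mul_sum, hbsum ε hε, mul_one]
    calc eig ε = ∑ a, ∑ j, M ε a j * b ε j := by
          rw [h1]; exact Finset.sum_congr rfl fun a _ => (heqv a).symm
      _ ≤ ∑ _a : Fin m, B := by
          refine Finset.sum_le_sum fun a _ => ?_
          calc ∑ j, M ε a j * b ε j ≤ ∑ j, B * b ε j :=
                Finset.sum_le_sum fun j _ =>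
                  mul_le_mul_of_nonneg_right (hAB a j) (hb' j).le
            _ = B * ∑ j, b ε j := by rw [Finset.mul_sum]
            _ = B := by rw [hbsum ε hε, mul_one]
      _ = (m:ℝ) * B := by
          rw [Finset.sum_const, Finset.card_univ, Fintype.card_fin, nsmul_eq_mul]
  have hgap : ∀ a ∈ T1, γ ≤ eig ε - M ε a a := by
    intro a ha
    have hγa := hγle a ha
    have h1 := (abs_le.1 (hdiag a)).2
    have h2 := (abs_le.1 (hdiag istar)).1
    have h3 : M ε istar istar ≤ eig ε := by
      have h4 : M ε istar istar * b ε istar ≤ eig ε * b ε istar := by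
        rw [← heqv istar]
        exact Finset.single_le_sum (f := fun j => M ε istar j * b ε j)
          (fun k _ => mul_nonneg (hAnn _ _) (hb' k).le) (Finset.mem_univ istar)
      exact le_of_mul_le_mul_right h4 (hb' istar)
    linarith
  have hsmall : ∀ (S : Finset (Fin m)) (i' : Fin m), i' ∈ S →
      (2/γ+1)^m * ∑ j ∈ S.erase i',
        M ε i' j * simplePathSum (M ε) j i' (S.erase i') ≤ γ/2 := by
    intro S i' hi'
    have h1 := cyc_sum_le hAnn hAB hB1 hdown hδ₀pos.le hm S i'
    have hcyc0 : 0 ≤ ∑ j ∈ S.erase i',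
        M ε i' j * simplePathSum (M ε) j i' (S.erase i') :=
      Finset.sum_nonneg fun j _ => mul_nonneg (hAnn _ _) (sps_nonneg hAnn _ _ _)
    have hP0 : (0:ℝ) ≤ (2/γ+1)^m := by positivity
    have h2 : (2/γ+1)^m * ∑ j ∈ S.erase i',
          M ε i' j * simplePathSum (M ε) j i' (S.erase i')
        ≤ (2/γ+1)^m * ((m:ℝ) * ((m:ℝ) * ((m:ℝ)^(m+1) * (δ₀ * B^(m+1))))) :=
      mul_le_mul_of_nonneg_left h1 hP0
    have h3 : (2/γ+1)^m * ((m:ℝ) * ((m:ℝ) * ((m:ℝ)^(m+1) * (δ₀ * B^(m+1)))))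
        = X * δ₀ := by rw [hX]; ring
    have h4 : X * δ₀ ≤ γ/2 := by nlinarith
    linarith
  -- upper bound
  have hupper := upper_induction hm hAnn hb' heqv hγpos T1 hgap hsmall T1.card T1
    (Finset.Subset.refl T1) le_rfl i hiT1
  have hT1c : T1ᶜ = T0 := by rw [hT1, compl_compl]
  rw [hT1c] at hupper
  set g := ∑ k ∈ T0, simplePathSum (M ε) i k T1 * b ε k with hg
  have hg0 : 0 ≤ g :=
    Finset.sum_nonneg fun k _ => mul_nonneg (sps_nonneg hAnn _ _ _) (hb' k).le
  have hcard1 : T1.card ≤ m := by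
    have h := Finset.card_le_univ T1
    simpa using h
  have hx1 : (1:ℝ) ≤ 2/γ + 1 := by
    have h0 : 0 < 2/γ := by positivity
    linarith
  have hupf : b ε i ≤ Cup * g := by
    refine hupper.trans ?_
    have h1 : (2/γ+1)^T1.card - 1 ≤ Cup := by
      rw [hCup]
      have := pow_le_pow_right₀ hx1 hcard1
      linarith
    exact mul_le_mul_of_nonneg_right h1 hg0
  -- lower bound
  have hlowf : g ≤ Klow * b ε i := by
    have hbnd : ∀ k ∈ T0, simplePathSum (M ε) i k T1 * b ε k
        ≤ (m:ℝ) * ((m:ℝ)^(m+1) * ((1+(m:ℝ)*B)^m * b ε i)) := fun k _ =>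
      sps_mul_le hm hAnn hb' heqv heeB i k T1
    have hc0 : (0:ℝ) ≤ (m:ℝ) * ((m:ℝ)^(m+1) * ((1+(m:ℝ)*B)^m * b ε i)) := by
      have := (hb' i).le
      positivity
    have h1 : g ≤ (m:ℝ) * ((m:ℝ) * ((m:ℝ)^(m+1) * ((1+(m:ℝ)*B)^m * b ε i))) := by
      rw [hg]
      refine sum_le_of_bound _ _ hc0 ?_ hbnd
      have h := Finset.card_le_univ T0
      simpa using h
    refine h1.trans (le_of_eq ?_)
    rw [hKlow]; ring
  constructor
  · -- c⁻¹ * g ≤ b ε i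
    have hc1 : (1:ℝ) ≤ max (max Cup Klow) 1 := le_max_right _ _
    have hcpos : (0:ℝ) < max (max Cup Klow) 1 := lt_of_lt_of_le one_pos hc1
    have h1 : g ≤ max (max Cup Klow) 1 * b ε i := by
      refine hlowf.trans ?_
      exact mul_le_mul_of_nonneg_right
        ((le_max_right Cup Klow).trans (le_max_left _ _)) (hb' i).le
    have h2 := mul_le_mul_of_nonneg_left h1 (inv_nonneg.2 hcpos.le)
    calc (max (max Cup Klow) 1)⁻¹ * g
        ≤ (max (max Cup Klow) 1)⁻¹ * (max (max Cup Klow) 1 * b ε i) := h2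
      _ = b ε i := by
          rw [← mul_assoc, inv_mul_cancel₀ (ne_of_gt hcpos), one_mul]
  · -- b ε i ≤ c * g
    refine hupf.trans ?_
    exact mul_le_mul_of_nonneg_right
      ((le_max_left Cup Klow).trans (le_max_left _ _)) hg0
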